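/- (Kierstead–Yang) For every graph G and every positive integer r, the weak r-coloring number satisfies wcol_r(G) ≤ scol_r(G)^r, where scol_r is the strong r-coloring number. -/

import Mathlib

/-- With respect to a linear order `le` on the vertices, `u` is strongly
`r`-reachable from `v`: `u = v`, or `u ⪯ v` and there is a `v`–`u` path of
length at most `r` all of whose internal vertices `w` satisfy `v ⪯ w`. -/
def StrongReach {V : Type*} (G : SimpleGraph V) (le : V → V → Prop) (r : ℕ)
    (u v : V) : Prop :=
  u = v ∨ (le u v ∧ ∃ p : G.Walk v u, p.IsPath ∧ p.length ≤ r ∧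
    ∀ w ∈ p.support, w ≠ u → w ≠ v → le v w)

/-- With respect to a linear order `le` on the vertices, `u` is weakly
`r`-reachable from `v`: `u = v`, or `u ⪯ v` and there is a `v`–`u` path of
length at most `r` all of whose internal vertices `w` satisfy `u ⪯ w`. -/
def WeakReach {V : Type*} (G : SimpleGraph V) (le : V → V → Prop) (r : ℕ)
    (u v : V) : Prop :=
  u = v ∨ (le u v ∧ ∃ p : G.Walk v u, p.IsPath ∧ p.length ≤ r ∧
    ∀ w ∈ p.support, w ≠ u → w ≠ v → le u w)

/-- Sets of endpoints of chains of length `n` of `f`-steps starting at `v`. -/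
def chainSet {V : Type*} [DecidableEq V] (f : V → Finset V) : ℕ → V → Finset V
  | 0, v => {v}
  | (n+1), v => (f v).biUnion (fun x => chainSet f n x)

lemma mem_chainSet_self {V : Type*} [DecidableEq V] (f : V → Finset V)
    (hf : ∀ v, v ∈ f v) : ∀ n v, v ∈ chainSet f n v := by
  intro n
  induction n with
  | zero => intro v; simp [chainSet]
  | succ n ih =>
    intro v
    simp only [chainSet, Finset.mem_biUnion]
    exact ⟨v, hf v, ih v⟩

lemma chainSet_card {V : Type*} [DecidableEq V] (f : V → Finset V) (k : ℕ)
    (hk : ∀ v, (f v).card ≤ k) : ∀ n v, (chainSet f n v).card ≤ k ^ n := by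
  intro n
  induction n with
  | zero => intro v; simp [chainSet]
  | succ n ih =>
    intro v
    calc (chainSet f (n+1) v).card ≤ ∑ x ∈ f v, (chainSet f n x).card :=
          Finset.card_biUnion_le
      _ ≤ ∑ _x ∈ f v, k ^ n := Finset.sum_le_sum (fun x _ => ih x)
      _ = (f v).card * k ^ n := by rw [Finset.sum_const, smul_eq_mul]
      _ ≤ k * k ^ n := Nat.mul_le_mul_right _ (hk v)
      _ = k ^ (n+1) := (pow_succ' k n).symm

/-- Split a walk at the first vertex satisfying `Q`. -/
lemma splitFirst {V : Type*} {G : SimpleGraph V} (Q : V → Prop) :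
    ∀ {v u : V} (p : G.Walk v u), ¬ Q v → Q u →
    ∃ x, ∃ p1 : G.Walk v x, ∃ p2 : G.Walk x u,
      p1.append p2 = p ∧ Q x ∧ ∀ w ∈ p1.support, w ≠ x → ¬ Q w := by
  intro v u p
  induction p with
  | nil => intro hv hu; exact absurd hu hv
  | @cons a b c h q ih =>
    intro hv hu
    by_cases hw : Q b
    · refine ⟨b, SimpleGraph.Walk.cons h .nil, q, by simp, hw, ?_⟩
      intro w hwmem hne
      simp only [SimpleGraph.Walk.support_cons, SimpleGraph.Walk.support_nil,
        List.mem_cons, List.mem_singleton] at hwmem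
      rcases hwmem with rfl | hwmem
      · exact hv
      · rcases hwmem with rfl | h'
        · exact absurd rfl hne
        · exact absurd h' List.not_mem_nil
    · obtain ⟨x, q1, q2, heq, hQx, hgood⟩ := ih hw hu
      refine ⟨x, SimpleGraph.Walk.cons h q1, q2, by
        rw [SimpleGraph.Walk.cons_append, heq], hQx, ?_⟩
      intro w hwmem hne
      rw [SimpleGraph.Walk.support_cons] at hwmem
      rcases List.mem_cons.mp hwmem with rfl | hmem
      · exact hv
      · exact hgood w hmem hne

/-- Main chain lemma: a weakly reachable vertex lies in the iterated
strong-reach chain set. -/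
lemma reachChain {V : Type*} [DecidableEq V] (G : SimpleGraph V)
    (le : V → V → Prop) (lin : IsLinearOrder V le) (r : ℕ)
    (f : V → Finset V) (hf : ∀ v x, StrongReach G le r x v → x ∈ f v) :
    ∀ n, n ≤ r → ∀ (v u : V) (p : G.Walk v u), p.IsPath → p.length ≤ n →
      (∀ w ∈ p.support, le u w) → u ∈ chainSet f n v := by
  haveI := lin
  have hself : ∀ v, v ∈ f v := fun v => hf v v (Or.inl rfl)
  intro n
  induction n using Nat.strong_induction_on with
  | _ n ih =>
    intro hnr v u p hp hlen hsupp
    by_cases huv : u = v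
    · subst huv
      exact mem_chainSet_self f hself n _
    · -- u ≠ v; since u ≤ every support vertex including v, le u v
      have hle_uv : le u v := hsupp v p.start_mem_support
      have hnvu : ¬ le v u := fun h => huv (antisymm hle_uv h)
      obtain ⟨x, p1, p2, happ, hQx, hgood⟩ :=
        splitFirst (fun w => ¬ le v w) p (by simp [refl_of le v]) hnvu
      have hlex : le x v := (total_of le v x).resolve_left hQx
      have hxv : x ≠ v := fun h => hQx (h ▸ refl_of le v)
      have hp1 : p1.IsPath := by
        rw [← happ] at hp; exact hp.of_append_left
      have hp2 : p2.IsPath := by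
        rw [← happ] at hp; exact hp.of_append_right
      have hlensum : p1.length + p2.length = p.length := by
        rw [← happ, SimpleGraph.Walk.length_append]
      have hp1pos : 1 ≤ p1.length := by
        rcases Nat.eq_zero_or_pos p1.length with h0 | h1
        · exact absurd (SimpleGraph.Walk.eq_of_length_eq_zero h0).symm hxv
        · exact h1
      -- x is strongly reachable from v
      have hxmem : x ∈ f v := by
        refine hf v x (Or.inr ⟨hlex, p1, hp1, ?_, ?_⟩)
        · omega
        · intro w hw hwx _
          exact not_not.mp (hgood w hw hwx)
      -- the rest of the path
      have hn1 : 1 ≤ n := le_trans hp1pos (le_trans (by omega) hlen)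
      obtain ⟨m, rfl⟩ : ∃ m, n = m + 1 := ⟨n - 1, by omega⟩
      have hsupp2 : ∀ w ∈ p2.support, le u w := by
        intro w hw
        apply hsupp
        rw [← happ, SimpleGraph.Walk.support_append]
        rw [p2.support_eq_cons] at hw
        rcases List.mem_cons.mp hw with rfl | hw'
        · exact List.mem_append_left _ p1.end_mem_support
        · exact List.mem_append_right _ hw'
      have := ih m (Nat.lt_succ_self m) (by omega) x u p2 hp2 (by omega) hsupp2
      simp only [chainSet, Finset.mem_biUnion]
      exact ⟨x, hxmem, this⟩

open scoped Classical in
/-- Kierstead–Yang: `wcol_r(G) ≤ scol_r(G)^r`.  If some linear order witnesses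
that every vertex strongly `r`-reaches at most `k` vertices, then some linear
order witnesses that every vertex weakly `r`-reaches at most `k^r` vertices. -/
theorem stmt19 {V : Type*} [Fintype V] (G : SimpleGraph V) (r : ℕ) (hr : 1 ≤ r)
    (k : ℕ)
    (h : ∃ le : V → V → Prop, IsLinearOrder V le ∧
      ∀ v : V, (Finset.univ.filter (fun u => StrongReach G le r u v)).card ≤ k) :
    ∃ le : V → V → Prop, IsLinearOrder V le ∧
      ∀ v : V, (Finset.univ.filter (fun u => WeakReach G le r u v)).card ≤ k ^ r := by
  haveI := Classical.decEq V
  obtain ⟨le, lin, hcard⟩ := h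
  refine ⟨le, lin, fun v => ?_⟩
  haveI := lin
  set f : V → Finset V := fun v => Finset.univ.filter (fun u => StrongReach G le r u v)
    with hf_def
  have hf : ∀ v x, StrongReach G le r x v → x ∈ f v := by
    intro v x hx
    simp [hf_def, hx]
  have hsub : (Finset.univ.filter (fun u => WeakReach G le r u v)) ⊆ chainSet f r v := by
    intro u hu
    rw [Finset.mem_filter] at hu
    rcases hu.2 with rfl | ⟨hle, p, hp, hlen, hint⟩
    · exact mem_chainSet_self f (fun v => hf v v (Or.inl rfl)) r u
    · refine reachChain G le lin r f hf r le_rfl v u p hp hlen ?_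
      intro w hw
      by_cases h1 : w = u
      · exact h1 ▸ refl_of le u
      · by_cases h2 : w = v
        · exact h2 ▸ hle
        · exact hint w hw h1 h2
  calc (Finset.univ.filter (fun u => WeakReach G le r u v)).card
      ≤ (chainSet f r v).card := Finset.card_le_card hsub
    _ ≤ k ^ r := chainSet_card f k hcard r v
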